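/- Let (M, ω¹,…,ωᵏ; Φ, J) be a polysymplectic Hamiltonian G-space, μ a regular value of J, i: J⁻¹(μ) ↪ M the inclusion. Then for every x ∈ J⁻¹(μ), T_x(G_μ·x) ⊆ ⋂_{A=1}^k ker (i*ω^A)(x); that is, for every ξ in the isotropy algebra g_μ and every X_x ∈ T_x(J⁻¹(μ)), ω^A(x)(ξ_M(x), X_x) = 0 for all A. -/
import Mathlib


/-- linearized at `x ∈ J⁻¹(μ)`: on `T = T_xM`, with `ω A` the
polysymplectic forms at `x`, `σ : 𝔤 → T` the infinitesimal generator map,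
`J' A = T_xJ^A`, `τ : 𝔤 → (𝔤*)^k` the infinitesimal `k`-coadjoint action at `μ`
(so `𝔤_μ = ker τ`), the momentum map condition gives:
for every `ξ ∈ 𝔤_μ` and every `X ∈ T_x(J⁻¹(μ)) = ⋂_A ker J'^A`,
`ω^A(ξ_M(x), X) = 0` for all `A`; i.e. `T_x(G_μ·x) ⊆ ⋂_A ker (i*ω^A)(x)`. -/
theorem isotropy_orbit_in_ker_restricted_forms
    {𝔤 T : Type*} [AddCommGroup 𝔤] [Module ℝ 𝔤] [FiniteDimensional ℝ 𝔤]
    [AddCommGroup T] [Module ℝ T] [FiniteDimensional ℝ T]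
    {k : ℕ} (ω : Fin k → T →ₗ[ℝ] T →ₗ[ℝ] ℝ)
    (hskew : ∀ A (v w : T), ω A v w = - ω A w v)
    (σ : 𝔤 →ₗ[ℝ] T)
    (J' : Fin k → T →ₗ[ℝ] Module.Dual ℝ 𝔤)
    (hmom : ∀ A (ξ : 𝔤) (X : T), ω A (σ ξ) X = J' A X ξ)
    (τ : 𝔤 →ₗ[ℝ] (Fin k → Module.Dual ℝ 𝔤)) :
    ∀ ξ ∈ LinearMap.ker τ, ∀ X : T, (∀ A, J' A X = 0) → ∀ A, ω A (σ ξ) X = 0 := by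
  intro ξ _ X hX A
  rw [hmom A ξ X, hX A]
  rfl
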